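/- Let M be a second-countable Hausdorff C^∞ manifold without boundary of dimension n, and let E = ℓ²(ℕ,ℝ) be the separable infinite-dimensional real Hilbert space. Then there exists a map f : M → E that is C^∞, is a topological embedding (a homeomorphism onto its image), and is an immersion (its differential at every point of M is injective). -/

import Mathlib

open scoped Manifold
open Function Set Topology

noncomputable section StmtAux

/-- The separable Hilbert space `ℓ²(ℕ,ℝ)`. -/
abbrev H2 : Type := lp (fun _ : ℕ => ℝ) 2

/-- Evaluation of the `m`-th coordinate, as a continuous linear map. -/
noncomputable def evH (m : ℕ) : H2 →L[ℝ] ℝ :=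
  LinearMap.mkContinuous
    { toFun := fun v => v m
      map_add' := fun v w => by
        have := lp.coeFn_add v w
        simp only [this, Pi.add_apply]
      map_smul' := fun c v => by
        have := lp.coeFn_smul c v
        simp only [this, Pi.smul_apply, smul_eq_mul, RingHom.id_apply] } 1
    fun v => by
      simpa using lp.norm_apply_le_norm (by norm_num) v m

@[simp] lemma evH_apply (m : ℕ) (v : H2) : evH m v = v m := rfl

/-- The `m`-th standard basis vector of `ℓ²(ℕ,ℝ)`. -/
noncomputable def eH (m : ℕ) : H2 := lp.single 2 m 1

lemma evH_eH (m m' : ℕ) : evH m (eH m') = if m = m' then 1 else 0 := by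
  simp only [evH_apply, eH, lp.single_apply]
  rcases eq_or_ne m m' with rfl | h
  · simp
  · rw [Pi.single_apply, if_neg h]

end StmtAux

/-- Auxiliary lemma: if a smooth map into `ℓ²` admits a continuous linear left factor through
an extended chart near `x`, then its differential at `x` is injective. -/
lemma stmt4_aux {n : ℕ} {M : Type*} [TopologicalSpace M]
    [ChartedSpace (EuclideanSpace ℝ (Fin n)) M] [IsManifold (𝓡 n) (⊤ : ℕ∞) M]
    {F : M → H2} (hF : ContMDiff (𝓡 n) 𝓘(ℝ, H2) (⊤ : ℕ∞) F)
    (P : H2 →L[ℝ] EuclideanSpace ℝ (Fin n)) {x : M} {c₀ : M}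
    (hx : x ∈ (chartAt (EuclideanSpace ℝ (Fin n)) c₀).source)
    (heq : (⇑P ∘ F) =ᶠ[nhds x] ⇑(extChartAt (𝓡 n) c₀)) :
    Function.Injective (mfderiv (𝓡 n) 𝓘(ℝ, H2) F x) := by
  have hdiff := hF.mdifferentiableAt (x := x) (by simp)
  have hcomp := P.hasMFDerivAt.comp x hdiff.hasMFDerivAt
  have hchart := (hasMFDerivAt_extChartAt (I := 𝓡 n) hx).congr_of_eventuallyEq heq
  have key := hasMFDerivAt_unique hcomp hchart
  have hker : (mfderiv (𝓡 n) 𝓘(ℝ, H2) F x).ker = ⊥ := by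
    apply bot_unique
    rw [← (mdifferentiable_chart (I := 𝓡 n) c₀).ker_mfderiv_eq_bot hx, ← key]
    exact LinearMap.ker_le_ker_comp _ _
  exact LinearMap.ker_eq_bot.mp hker

set_option maxHeartbeats 1600000 in
set_option synthInstance.maxHeartbeats 400000 in
/-- Every second-countable Hausdorff `C^∞` manifold without boundary of dimension `n` admits a
`C^∞` map into the separable Hilbert space `ℓ²(ℕ,ℝ)` that is a topological embedding and
an immersion. -/
theorem stmt_4 (n : ℕ) {M : Type*} [TopologicalSpace M] [T2Space M]
    [SecondCountableTopology M] [ChartedSpace (EuclideanSpace ℝ (Fin n)) M]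
    [IsManifold (𝓡 n) (⊤ : ℕ∞) M] :
    ∃ f : M → lp (fun _ : ℕ => ℝ) 2,
      ContMDiff (𝓡 n) 𝓘(ℝ, lp (fun _ : ℕ => ℝ) 2) (⊤ : ℕ∞) f ∧
      Topology.IsEmbedding f ∧
      ∀ p : M, Function.Injective (mfderiv (𝓡 n) 𝓘(ℝ, lp (fun _ : ℕ => ℝ) 2) f p) := by
  classical
  haveI : LocallyCompactSpace M := Manifold.locallyCompact_of_finiteDimensional (𝓡 n)
  obtain ⟨ι, f, -⟩ := SmoothBumpCovering.exists_isSubordinate (I := 𝓡 n) (M := M)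
    isClosed_univ (fun x _ => Filter.univ_mem)
  -- the index type is countable
  have hne : ∀ i, (support (f i)).Nonempty := fun i => ⟨f.c i, by simp [Function.mem_support]⟩
  haveI : Countable ι := Set.countable_univ_iff.mp (f.locallyFinite.countable_univ hne)
  obtain ⟨enc, henc⟩ := Countable.exists_injective_nat ι
  -- disjoint blocks of coordinates
  set κ : ι → Fin (n + 1) → ℕ := fun i k => Nat.pair (enc i) (k : ℕ) + 1 with hκdef
  have κ_ne : ∀ i k, κ i k ≠ 0 := fun i k => Nat.succ_ne_zero _
  have κ_inj : ∀ {i j : ι} {k l : Fin (n + 1)}, κ i k = κ j l → i = j ∧ k = l := by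
    intro i j k l h
    simp only [hκdef, add_left_inj] at h
    obtain ⟨h1, h2⟩ := Nat.pair_eq_pair.mp h
    exact ⟨henc h1, Fin.val_injective h2⟩
  set c := f.c with hc
  set a : ι → M → EuclideanSpace ℝ (Fin n) :=
    fun i x => f i x • extChartAt (𝓡 n) (c i) x with ha
  set b : ι → M → Fin (n + 1) → ℝ :=
    fun i x => Fin.snoc (fun k => a i x k) (f i x) with hb
  set G : ι → M → H2 := fun i x => ∑ k : Fin (n + 1), b i x k • eH (κ i k) with hG
  have ha_smooth : ∀ i, ContMDiff (𝓡 n) 𝓘(ℝ, EuclideanSpace ℝ (Fin n)) (⊤ : ℕ∞) (a i) := fun i =>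
    (f i).contMDiff_smul contMDiffOn_extChartAt
  have hb_smooth : ∀ i k, ContMDiff (𝓡 n) 𝓘(ℝ) (⊤ : ℕ∞) (fun x => b i x k) := by
    intro i k
    induction k using Fin.lastCases with
    | last => simpa [hb, Fin.snoc_last] using (f i).contMDiff
    | cast j =>
      have := (EuclideanSpace.proj (𝕜 := ℝ) j).contMDiff.comp (ha_smooth i)
      simpa [hb, Fin.snoc_castSucc, Function.comp_def] using this
  have hG_smooth : ∀ i, ContMDiff (𝓡 n) 𝓘(ℝ, H2) (⊤ : ℕ∞) (G i) := fun i =>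
    contMDiff_finset_sum fun k _ => (hb_smooth i k).smul contMDiff_const
  have hb_zero : ∀ i x, f i x = 0 → ∀ k, b i x k = 0 := by
    intro i x hf0 k
    induction k using Fin.lastCases with
    | last => simp [hb, Fin.snoc_last, hf0]
    | cast j => simp [hb, Fin.snoc_castSucc, ha, hf0]
  have hGsupp : ∀ i, support (G i) ⊆ support (f i) := by
    intro i x hx
    rw [Function.mem_support] at hx ⊢
    intro hf0
    exact hx (by simp [hG, fun k => hb_zero i x hf0 k])
  -- the partition of unity and the proper function `h`
  set ρ := f.toSmoothPartitionOfUnity with hρ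
  set h : M → ℝ := fun x => ∑ᶠ i, (enc i : ℝ) * ρ i x with hh
  have hρsupp : ∀ i, support (fun x => (enc i : ℝ) * ρ i x) ⊆ support (f i) := by
    intro i x hx
    rw [Function.mem_support] at hx
    have : ρ i x ≠ 0 := fun h0 => hx (by simp [h0])
    exact f.support_toSmoothPartitionOfUnity_subset i this
  have hh_smooth : ContMDiff (𝓡 n) 𝓘(ℝ) (⊤ : ℕ∞) h :=
    contMDiff_finsum (fun i => contMDiff_const.mul (ρ i).contMDiff)
      (f.locallyFinite.subset hρsupp)
  -- the embedding
  set F : M → H2 := fun x => h x • eH 0 + ∑ᶠ i, G i x with hF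
  have hF_smooth : ContMDiff (𝓡 n) 𝓘(ℝ, H2) (⊤ : ℕ∞) F :=
    (hh_smooth.smul contMDiff_const).add
      (contMDiff_finsum hG_smooth (f.locallyFinite.subset hGsupp))
  -- pointwise finite supports
  have hGfin : ∀ x : M, (support fun i => G i x).Finite := fun x =>
    (f.locallyFinite.point_finite x).subset fun i hi => hGsupp i hi
  have hsum_eq : ∀ x : M, ∀ m : ℕ,
      evH m (F x) = h x * evH m (eH 0) + ∑ᶠ j, evH m (G j x) := by
    intro x m
    rw [hF]
    simp only [map_add, map_smul, smul_eq_mul]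
    congr 1
    have hTsub : support (fun j => G j x) ⊆ ((hGfin x).toFinset : Set ι) :=
      fun j hj => (hGfin x).mem_toFinset.mpr hj
    rw [finsum_eq_finset_sum_of_support_subset _ hTsub, map_sum]
    refine (finsum_eq_finset_sum_of_support_subset _ fun j hj => ?_).symm
    refine hTsub ?_
    rw [Function.mem_support] at hj ⊢
    exact fun h0 => hj (by simp [h0])
  have evG : ∀ (i : ι) (k : Fin (n + 1)) (j : ι) (x : M),
      evH (κ i k) (G j x) = if j = i then b i x k else 0 := by
    intro i k j x
    have hterm : ∀ k' : Fin (n + 1), evH (κ i k) (b j x k' • eH (κ j k')) =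
        if κ j k' = κ i k then b j x k' else 0 := by
      intro k'
      rw [map_smul, smul_eq_mul, evH_eH]
      rcases eq_or_ne (κ j k') (κ i k) with hc | hc
      · rw [if_pos hc.symm, if_pos hc, mul_one]
      · rw [if_neg (Ne.symm hc), if_neg hc, mul_zero]
    simp only [hG]
    rw [map_sum]
    simp only [hterm]
    rcases eq_or_ne j i with rfl | hji
    · rw [if_pos rfl, Finset.sum_eq_single k]
      · rw [if_pos rfl]
      · intro k' _ hkk
        exact if_neg fun hc => hkk (κ_inj hc).2
      · intro hk
        exact absurd (Finset.mem_univ k) hk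
    · rw [if_neg hji]
      exact Finset.sum_eq_zero fun k' _ => if_neg fun hc => hji (κ_inj hc).1
  have evF : ∀ (i : ι) (k : Fin (n + 1)) (x : M), evH (κ i k) (F x) = b i x k := by
    intro i k x
    rw [hsum_eq x (κ i k), evH_eH, if_neg (κ_ne i k), mul_zero, zero_add]
    have hj : ∀ j, evH (κ i k) (G j x) = if j = i then b i x k else 0 := fun j => evG i k j x
    simp only [hj]
    rw [finsum_eq_single (fun j => if j = i then b i x k else 0) i fun j hj => if_neg hj,
      if_pos rfl]
  have evF0 : ∀ x : M, evH 0 (F x) = h x := by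
    intro x
    rw [hsum_eq x 0, evH_eH, if_pos rfl, mul_one]
    have hz : ∀ j, evH 0 (G j x) = 0 := by
      intro j
      simp only [hG]
      rw [map_sum]
      refine Finset.sum_eq_zero fun k _ => ?_
      rw [map_smul, smul_eq_mul, evH_eH, if_neg (Ne.symm (κ_ne j k)), mul_zero]
    simp [hz]
  -- injectivity
  have hFinj : Function.Injective F := by
    intro x y hxy
    set i := f.ind x (Set.mem_univ x) with hi
    have h1x : f i x = 1 := f.apply_ind x (Set.mem_univ x)
    have hky : ∀ k, b i y k = b i x k := fun k => by
      rw [← evF i k y, ← evF i k x, hxy]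
    have h1y : f i y = 1 := by
      have := hky (Fin.last n)
      simp only [hb, Fin.snoc_last] at this
      rw [this, h1x]
    have hsy := f.mem_extChartAt_source_of_eq_one h1y
    have hsx := f.mem_extChartAt_ind_source x (Set.mem_univ x)
    have hcoord : extChartAt (𝓡 n) (c i) x = extChartAt (𝓡 n) (c i) y := by
      apply PiLp.ext
      intro k
      have := hky k.castSucc
      simp only [hb, Fin.snoc_castSucc, ha, h1x, h1y, one_smul] at this
      exact this.symm
    exact (extChartAt (𝓡 n) (c i)).injOn hsx hsy hcoord
  -- immersion
  have hFmd : ∀ p : M, Function.Injective (mfderiv (𝓡 n) 𝓘(ℝ, H2) F p) := by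
    intro x
    set i := f.ind x (Set.mem_univ x) with hi
    set P : H2 →L[ℝ] EuclideanSpace ℝ (Fin n) :=
      ((PiLp.continuousLinearEquiv 2 ℝ (fun _ : Fin n => ℝ)).symm :
        (∀ _ : Fin n, ℝ) →L[ℝ] EuclideanSpace ℝ (Fin n)).comp
        (ContinuousLinearMap.pi fun k : Fin n => evH (κ i k.castSucc)) with hP
    have hPF : ∀ y, P (F y) = f i y • extChartAt (𝓡 n) (c i) y := by
      intro y
      apply PiLp.ext
      intro k
      have h1 : P (F y) k = evH (κ i k.castSucc) (F y) := rfl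
      rw [h1, evF i k.castSucc y]
      simp [hb, Fin.snoc_castSucc, ha]
    refine stmt4_aux hF_smooth P (f.mem_chartAt_ind_source x (Set.mem_univ x)) ?_
    filter_upwards [f.eventuallyEq_one x (Set.mem_univ x)] with y hy
    have h1 : f i y = 1 := hy
    rw [Function.comp_apply, hPF y, h1, one_smul, hi, hc]
  -- properness and embedding
  have hcont : Continuous F := hF_smooth.continuous
  have hρ_comp : ∀ i, IsCompact (tsupport (⇑(ρ i))) := by
    intro i
    refine IsCompact.of_isClosed_subset (f i).hasCompactSupport (isClosed_closure) ?_
    exact closure_mono (f.support_toSmoothPartitionOfUnity_subset i)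
  have hproper : ∀ K : Set H2, IsCompact K → IsCompact (F ⁻¹' K) := by
    intro K hK
    obtain ⟨C, hC⟩ := (hK.image (evH 0).continuous).bddAbove
    obtain ⟨N, hNC⟩ := exists_nat_ge C
    have hhN : ∀ x ∈ F ⁻¹' K, h x ≤ N := by
      intro x hx
      have : h x ∈ evH 0 '' K := ⟨F x, hx, evF0 x⟩
      exact le_trans (hC this) hNC
    set S : Set ι := {i | enc i ≤ N} with hS
    have hSfin : S.Finite := (Set.finite_Iic N).preimage henc.injOn
    have hsub : F ⁻¹' K ⊆ ⋃ i ∈ S, tsupport (⇑(ρ i)) := by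
      intro x hx
      by_contra hx'
      simp only [Set.mem_iUnion, not_exists] at hx'
      have hzero : ∀ i : ι, enc i ≤ N → ρ i x = 0 := by
        intro i hiN
        exact image_eq_zero_of_notMem_tsupport (hx' i hiN)
      have hfin1 : (support fun i => ρ i x).Finite := by
        refine (ρ.locallyFinite.point_finite x).subset fun i hi => ?_
        exact hi
      set T := hfin1.toFinset with hT
      have hsub1 : support (fun i => ρ i x) ⊆ (T : Set ι) := by
        intro i hi; simpa [hT] using hfin1.mem_toFinset.mpr hi
      have hsum1 : ∑ i ∈ T, ρ i x = 1 := by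
        rw [← finsum_eq_finset_sum_of_support_subset _ hsub1]
        exact ρ.sum_eq_one (Set.mem_univ x)
      have hhx : h x = ∑ i ∈ T, (enc i : ℝ) * ρ i x := by
        refine finsum_eq_finset_sum_of_support_subset _ fun i hi => ?_
        refine hsub1 ?_
        rw [Function.mem_support] at hi ⊢
        exact fun h0 => hi (by simp [h0])
      have hle : (N + 1 : ℝ) ≤ h x := by
        rw [hhx]
        calc (N + 1 : ℝ) = ∑ i ∈ T, (N + 1 : ℝ) * ρ i x := by
              rw [← Finset.mul_sum, hsum1, mul_one]
          _ ≤ ∑ i ∈ T, (enc i : ℝ) * ρ i x := by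
              refine Finset.sum_le_sum fun i _ => ?_
              rcases eq_or_ne (ρ i x) 0 with h0 | h0
              · simp [h0]
              · have hgt : ¬ enc i ≤ N := fun hc => h0 (hzero i hc)
                have : (N + 1 : ℝ) ≤ (enc i : ℝ) := by
                  exact_mod_cast Nat.succ_le_of_lt (Nat.lt_of_not_le hgt)
                exact mul_le_mul_of_nonneg_right this (ρ.nonneg i x)
      have := hhN x hx
      linarith
    refine IsCompact.of_isClosed_subset ?_ (hK.isClosed.preimage hcont) hsub
    exact hSfin.isCompact_biUnion fun i _ => hρ_comp i
  have hprop : IsProperMap F :=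
    isProperMap_iff_isCompact_preimage.mpr ⟨hcont, fun K hK => hproper K hK⟩
  have hemb : Topology.IsEmbedding F :=
    (Topology.IsClosedEmbedding.of_continuous_injective_isClosedMap hcont hFinj
      hprop.isClosedMap).toIsEmbedding
  exact ⟨F, hF_smooth, hemb, hFmd⟩
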